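/- Let m be a positive integer and λ_1,...,λ_n real numbers. Then det(sin(π h λ_t / m))_{1≤h,t≤n} = 2^{n²-n} · ∏_{1≤h<t≤n} sin(π(λ_h - λ_t)/(2m)) · ∏_{1≤h≤t≤n} sin(π(λ_h + λ_t)/(2m)). -/

import Mathlib

open Real

open Polynomial in
/-- Degree and top coefficient of Chebyshev `U`. -/
lemma chebU_deg_coeff : ∀ k : ℕ, (Chebyshev.U ℝ k).natDegree = k ∧
    (Chebyshev.U ℝ k).coeff k = 2 ^ k
  | 0 => by simp [Chebyshev.U_zero]
  | 1 => by
      have hC2 : (2 : ℝ[X]) = C 2 := (map_ofNat C 2).symm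
      constructor
      · rw [show ((1:ℕ):ℤ) = 1 by norm_num, Chebyshev.U_one, hC2]
        exact natDegree_C_mul_X 2 two_ne_zero
      · rw [show ((1:ℕ):ℤ) = 1 by norm_num, Chebyshev.U_one, hC2]
        simp
  | (k+2) => by
      obtain ⟨hqd, hqc⟩ := chebU_deg_coeff k
      obtain ⟨hpd, hpc⟩ := chebU_deg_coeff (k+1)
      have hrec := Chebyshev.U_add_two ℝ (k : ℤ)
      have hcast : ((k+2:ℕ):ℤ) = (k:ℤ) + 2 := by push_cast; ring
      have hcast1 : ((k:ℤ) + 1) = ((k+1:ℕ):ℤ) := by push_cast; ring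
      rw [hcast, hrec, hcast1]
      set p := Chebyshev.U ℝ ((k+1:ℕ):ℤ) with hp
      set q := Chebyshev.U ℝ (k:ℤ) with hq
      have hpne : p ≠ 0 := by
        intro h
        rw [h] at hpc
        simp at hpc
        exact absurd hpc (by positivity)
      have h2form : (2 : ℝ[X]) * X * p = C 2 * (X * p) := by
        rw [(map_ofNat C 2).symm]; ring
      have hXp : (X * p).natDegree = k + 2 := by
        rw [natDegree_X_mul hpne, hpd]
      have hAd : ((2 : ℝ[X]) * X * p).natDegree = k + 2 := by
        rw [h2form, natDegree_C_mul two_ne_zero, hXp]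
      have hlt : q.natDegree < ((2 : ℝ[X]) * X * p).natDegree := by
        rw [hAd, hqd]; omega
      constructor
      · rw [Polynomial.natDegree_sub_eq_left_of_natDegree_lt hlt, hAd]
      · rw [Polynomial.coeff_sub,
          Polynomial.coeff_eq_zero_of_natDegree_lt (by rw [hqd]; omega : q.natDegree < k + 2),
          sub_zero, h2form, Polynomial.coeff_C_mul, Polynomial.coeff_X_mul, hpc]
        ring

/-- Product of two sines as a cosine difference. -/
lemma sin_pair (a b : ℝ) :
    Real.sin ((a - b) / 2) * Real.sin ((a + b) / 2) = (Real.cos b - Real.cos a) / 2 := by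
  have h := Real.cos_sub_cos b a
  rw [show (a - b) / 2 = -((b - a) / 2) by ring, Real.sin_neg,
    show (a + b) / 2 = (b + a) / 2 by ring]
  linear_combination (-1/2) * h

open Polynomial in
/-- Equation (sindet): determinant of sines evaluation. -/
theorem stmt_4 (m : ℕ) (hm : 0 < m) (n : ℕ) (hn : 0 < n) (lam : Fin n → ℝ) :
    Matrix.det (Matrix.of fun h t : Fin n =>
        Real.sin (π * ((h : ℕ) + 1) * lam t / m)) =
      2 ^ (n ^ 2 - n) *
        (∏ t : Fin n, ∏ h ∈ Finset.Iio t, Real.sin (π * (lam h - lam t) / (2 * m))) *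
        ∏ t : Fin n, ∏ h ∈ Finset.Iic t, Real.sin (π * (lam h + lam t) / (2 * m)) := by
  have hm' : (m : ℝ) ≠ 0 := Nat.cast_ne_zero.mpr hm.ne'
  set θ : Fin n → ℝ := fun t => π * lam t / m with hθ
  set A : Matrix (Fin n) (Fin n) ℝ :=
    Matrix.of (fun h t : Fin n => (Chebyshev.U ℝ (h:ℕ)).eval (Real.cos (θ t))) with hA
  set N : ℕ := ∑ t : Fin n, (t : ℕ) with hN
  -- Step A : rewrite the matrix.
  have hM : (Matrix.of fun h t : Fin n => Real.sin (π * ((h : ℕ) + 1) * lam t / m)) =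
      Matrix.of (fun h t : Fin n => Real.sin (θ t) * A h t) := by
    ext h t
    have hu := Chebyshev.U_real_cos (θ t) (h : ℕ)
    have harg : ((((h:ℕ):ℤ):ℝ) + 1) * θ t = π * ((h:ℕ) + 1) * lam t / m := by
      rw [hθ]; push_cast; ring
    rw [harg] at hu
    simp only [Matrix.of_apply, hA]
    rw [← hu]; ring
  -- Step B : determinant of A.
  have hAdet : A.det = (2:ℝ) ^ N *
      ∏ i : Fin n, ∏ j ∈ Finset.Ioi i, (Real.cos (θ j) - Real.cos (θ i)) := by
    set p : Fin n → ℝ[X] := fun h => C ((2:ℝ)⁻¹ ^ (h:ℕ)) * Chebyshev.U ℝ (h:ℕ) with hpdef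
    have h_deg : ∀ h : Fin n, (p h).natDegree = h := by
      intro h
      rw [hpdef, natDegree_C_mul (by positivity), (chebU_deg_coeff (h:ℕ)).1]
    have h_monic : ∀ h : Fin n, (p h).Monic := by
      intro h
      have hd := (chebU_deg_coeff (h:ℕ)).1
      have hc := (chebU_deg_coeff (h:ℕ)).2
      unfold Polynomial.Monic
      rw [hpdef]
      rw [Polynomial.leadingCoeff_mul, Polynomial.leadingCoeff_C,
        Polynomial.leadingCoeff, hd, hc]
      rw [← mul_pow]; norm_num
    have hvdm := Matrix.det_eval_matrixOfPolynomials_eq_det_vandermonde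
      (fun t => Real.cos (θ t)) p (fun i => (h_deg i)) h_monic
    have hsplit : (Matrix.of fun (i j : Fin n) => (p j).eval (Real.cos (θ i))) =
        Matrix.of (fun i j : Fin n => ((2:ℝ)⁻¹ ^ (j:ℕ)) * (Matrix.of
          (fun i j : Fin n => (Chebyshev.U ℝ (j:ℕ)).eval (Real.cos (θ i))) i j)) := by
      ext i j
      simp [hpdef, Polynomial.eval_C_mul]
    have htrans : (Matrix.of (fun i j : Fin n =>
        (Chebyshev.U ℝ (j:ℕ)).eval (Real.cos (θ i)))) = A.transpose := by
      ext i j; simp [hA, Matrix.transpose_apply]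
    have hprodN : (∏ j : Fin n, (2:ℝ)⁻¹ ^ (j:ℕ)) = (2:ℝ)⁻¹ ^ N := by
      rw [hN, Finset.prod_pow_eq_pow_sum]
    rw [hsplit, Matrix.det_mul_row, htrans, Matrix.det_transpose, hprodN] at hvdm
    rw [Matrix.det_vandermonde] at hvdm
    have h2N : ((2:ℝ)^N) * ((2:ℝ)⁻¹^N) = 1 := by
      rw [← mul_pow]; norm_num
    calc A.det = ((2:ℝ)^N * (2:ℝ)⁻¹^N) * A.det := by rw [h2N, one_mul]
      _ = (2:ℝ)^N * ((2:ℝ)⁻¹^N * A.det) := by ring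
      _ = (2:ℝ)^N * ∏ i : Fin n, ∏ j ∈ Finset.Ioi i,
            (Real.cos (θ j) - Real.cos (θ i)) := by rw [← hvdm]
  -- LHS value
  have hLHS : Matrix.det (Matrix.of fun h t : Fin n =>
      Real.sin (π * ((h : ℕ) + 1) * lam t / m)) =
      (∏ t : Fin n, Real.sin (θ t)) * ((2:ℝ) ^ N *
        ∏ i : Fin n, ∏ j ∈ Finset.Ioi i, (Real.cos (θ j) - Real.cos (θ i))) := by
    rw [hM, Matrix.det_mul_row, hAdet]
  rw [hLHS]
  -- Step C : right hand side.
  have hargdiff : ∀ h t : Fin n, π * (lam h - lam t) / (2 * m) = (θ h - θ t) / 2 := by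
    intro h t; rw [hθ]; field_simp
  have hargsum : ∀ h t : Fin n, π * (lam h + lam t) / (2 * m) = (θ h + θ t) / 2 := by
    intro h t; rw [hθ]; field_simp
  have hsum : (∏ t : Fin n, ∏ h ∈ Finset.Iic t, Real.sin (π * (lam h + lam t) / (2 * m))) =
      (∏ t : Fin n, Real.sin (θ t)) *
        ∏ t : Fin n, ∏ h ∈ Finset.Iio t, Real.sin ((θ h + θ t) / 2) := by
    rw [← Finset.prod_mul_distrib]
    refine Finset.prod_congr rfl (fun t _ => ?_)
    rw [← Finset.Iio_insert t, Finset.prod_insert (by simp)]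
    congr 1
    · rw [hargsum t t]; congr 1; ring
    · exact Finset.prod_congr rfl (fun h _ => by rw [hargsum h t])
  have hdiff : (∏ t : Fin n, ∏ h ∈ Finset.Iio t, Real.sin (π * (lam h - lam t) / (2 * m))) =
      ∏ t : Fin n, ∏ h ∈ Finset.Iio t, Real.sin ((θ h - θ t) / 2) := by
    exact Finset.prod_congr rfl fun t _ => Finset.prod_congr rfl fun h _ => by
      rw [hargdiff h t]
  rw [hsum, hdiff]
  -- combine double products
  have hcomb : (∏ t : Fin n, ∏ h ∈ Finset.Iio t, Real.sin ((θ h - θ t) / 2)) *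
      (∏ t : Fin n, ∏ h ∈ Finset.Iio t, Real.sin ((θ h + θ t) / 2)) =
      (2:ℝ)⁻¹ ^ N * ∏ t : Fin n, ∏ h ∈ Finset.Iio t, (Real.cos (θ t) - Real.cos (θ h)) := by
    rw [← Finset.prod_mul_distrib]
    have : ∀ t : Fin n, (∏ h ∈ Finset.Iio t, Real.sin ((θ h - θ t) / 2)) *
        (∏ h ∈ Finset.Iio t, Real.sin ((θ h + θ t) / 2)) =
        (2:ℝ)⁻¹ ^ (t:ℕ) * ∏ h ∈ Finset.Iio t, (Real.cos (θ t) - Real.cos (θ h)) := by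
      intro t
      rw [← Finset.prod_mul_distrib]
      have : (∏ h ∈ Finset.Iio t, (Real.sin ((θ h - θ t) / 2) * Real.sin ((θ h + θ t) / 2))) =
          ∏ h ∈ Finset.Iio t, ((2:ℝ)⁻¹ * (Real.cos (θ t) - Real.cos (θ h))) := by
        refine Finset.prod_congr rfl (fun h _ => ?_)
        rw [sin_pair (θ h) (θ t)]; ring
      rw [this, Finset.prod_mul_distrib, Finset.prod_const, Fin.card_Iio]
    calc (∏ t : Fin n, (∏ h ∈ Finset.Iio t, Real.sin ((θ h - θ t) / 2)) *
          ∏ h ∈ Finset.Iio t, Real.sin ((θ h + θ t) / 2))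
        = ∏ t : Fin n, ((2:ℝ)⁻¹ ^ (t:ℕ) *
            ∏ h ∈ Finset.Iio t, (Real.cos (θ t) - Real.cos (θ h))) :=
          Finset.prod_congr rfl (fun t _ => this t)
      _ = (∏ t : Fin n, (2:ℝ)⁻¹ ^ (t:ℕ)) *
            ∏ t : Fin n, ∏ h ∈ Finset.Iio t, (Real.cos (θ t) - Real.cos (θ h)) :=
          Finset.prod_mul_distrib
      _ = (2:ℝ)⁻¹ ^ N * ∏ t : Fin n, ∏ h ∈ Finset.Iio t,
            (Real.cos (θ t) - Real.cos (θ h)) := by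
          rw [hN, Finset.prod_pow_eq_pow_sum]
  -- swap product orientation
  have hswap : (∏ i : Fin n, ∏ j ∈ Finset.Ioi i, (Real.cos (θ j) - Real.cos (θ i))) =
      ∏ t : Fin n, ∏ h ∈ Finset.Iio t, (Real.cos (θ t) - Real.cos (θ h)) := by
    exact Finset.prod_comm' (by simp)
  -- power bookkeeping
  have h2Nsq : n ^ 2 - n = N + N := by
    have hg := Finset.sum_range_id_mul_two n
    have hNval : N = ∑ i ∈ Finset.range n, i := by
      rw [hN]; exact Fin.sum_univ_eq_sum_range (fun i => i) n
    have : n * (n - 1) = n ^ 2 - n := by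
      rw [mul_comm, tsub_mul, one_mul, ← pow_two]
    omega
  have hpow : (2:ℝ) ^ (n ^ 2 - n) * (2:ℝ)⁻¹ ^ N = (2:ℝ) ^ N := by
    rw [h2Nsq, pow_add]
    rw [mul_assoc, ← mul_pow]
    norm_num
  rw [hswap]
  calc (∏ t : Fin n, Real.sin (θ t)) * ((2:ℝ) ^ N *
        ∏ t : Fin n, ∏ h ∈ Finset.Iio t, (Real.cos (θ t) - Real.cos (θ h)))
      = (∏ t : Fin n, Real.sin (θ t)) * (((2:ℝ) ^ (n ^ 2 - n) * (2:ℝ)⁻¹ ^ N) *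
        ∏ t : Fin n, ∏ h ∈ Finset.Iio t, (Real.cos (θ t) - Real.cos (θ h))) := by rw [hpow]
    _ = 2 ^ (n ^ 2 - n) *
        (∏ t : Fin n, ∏ h ∈ Finset.Iio t, Real.sin ((θ h - θ t) / 2)) *
        ((∏ t : Fin n, Real.sin (θ t)) *
          ∏ t : Fin n, ∏ h ∈ Finset.Iio t, Real.sin ((θ h + θ t) / 2)) := by
        rw [show 2 ^ (n ^ 2 - n) *
            (∏ t : Fin n, ∏ h ∈ Finset.Iio t, Real.sin ((θ h - θ t) / 2)) *
            ((∏ t : Fin n, Real.sin (θ t)) *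
              ∏ t : Fin n, ∏ h ∈ Finset.Iio t, Real.sin ((θ h + θ t) / 2)) =
            (∏ t : Fin n, Real.sin (θ t)) * ((2:ℝ) ^ (n ^ 2 - n) *
              ((∏ t : Fin n, ∏ h ∈ Finset.Iio t, Real.sin ((θ h - θ t) / 2)) *
               (∏ t : Fin n, ∏ h ∈ Finset.Iio t, Real.sin ((θ h + θ t) / 2)))) by ring,
          hcomb]
        ring
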